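/- The total number of peaks in all Dyck paths of order n (for n ≥ 1) equals C(2n-1, n), i.e., ∑_{k=1}^{n} k · N(n,k) = C(2n-1, n), where N(n,k) = (1/n)·C(n,k)·C(n,k-1) is the Narayana number. -/

import Mathlib

/-- A peak at position `i`: an up-step (`true`) immediately followed by a down-step. -/
def IsPeakAt (w : List Bool) (i : ℕ) : Prop :=
  w[i]? = some true ∧ w[i + 1]? = some false

/-- A Dyck word: equally many up- and down-steps, every prefix has at least as
many up-steps as down-steps. -/
def IsDyck (w : List Bool) : Prop :=
  w.count true = w.count false ∧ ∀ p, p <+: w → p.count false ≤ p.count true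

open List

lemma bool_count_true_add_count_false (w : List Bool) : w.count true + w.count false = w.length := by
  induction w with
  | nil => simp
  | cons a l ih => cases a <;> simp [List.count_cons] <;> omega

lemma isDyck_iff (w : List Bool) : IsDyck w ↔ w.count true = w.count false ∧
    ∀ j, (w.take j).count false ≤ (w.take j).count true := by
  unfold IsDyck
  refine and_congr_right fun _ => ⟨fun h j => h _ (List.take_prefix j w), fun h p hp => ?_⟩
  rw [List.prefix_iff_eq_take.mp hp]
  exact h _

def insPair (v : List Bool) (i : ℕ) : List Bool := v.take i ++ true :: false :: v.drop i

lemma insPair_length (v : List Bool) (i : ℕ) : (insPair v i).length = v.length + 2 := by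
  simp [insPair]; omega

lemma insPair_count (v : List Bool) (i : ℕ) (b : Bool) :
    (insPair v i).count b = v.count b + 1 := by
  have h : v.count b = (v.take i).count b + (v.drop i).count b := by
    rw [← List.count_append, List.take_append_drop]
  rw [insPair, List.count_append, h]
  cases b <;> simp [List.count_cons] <;> omega

lemma insPair_take_of_le {v : List Bool} {i j : ℕ} (hi : i ≤ v.length) (hj : j ≤ i) :
    (insPair v i).take j = v.take j := by
  rw [insPair, List.take_append, List.length_take]
  have : j - min i v.length = 0 := by omega
  rw [this, List.take_take]
  simp [Nat.min_eq_left hj]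

lemma insPair_take_succ {v : List Bool} {i : ℕ} (hi : i ≤ v.length) :
    (insPair v i).take (i+1) = v.take i ++ [true] := by
  rw [insPair, List.take_append, List.length_take, Nat.min_eq_left hi]
  rw [List.take_of_length_le ((List.length_take_le ..).trans (by omega))]
  congr 1
  have : i + 1 - i = 1 := by omega
  rw [this]
  rfl

lemma insPair_take_of_ge {v : List Bool} {i j : ℕ} (hi : i ≤ v.length) (hj : i ≤ j) :
    (insPair v i).take (j+2) = v.take i ++ true :: false :: (v.drop i).take (j-i) := by
  rw [insPair, List.take_append, List.length_take, Nat.min_eq_left hi]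
  rw [List.take_of_length_le ((List.length_take_le ..).trans (by omega))]
  congr 1
  have : j + 2 - i = (j - i) + 2 := by omega
  rw [this]
  rfl

lemma insPair_drop (v : List Bool) {i : ℕ} (hi : i ≤ v.length) :
    (insPair v i).drop (i+2) = v.drop i := by
  rw [insPair, show i + 2 = (v.take i).length + 2 by simp [Nat.min_eq_left hi]]
  rw [show (v.take i).length + 2 = (v.take i ++ [true, false]).length by simp]
  rw [show v.take i ++ true :: false :: v.drop i = (v.take i ++ [true, false]) ++ v.drop i by simp]
  exact List.drop_left

lemma isDyck_insPair_iff {v : List Bool} {i : ℕ} (hi : i ≤ v.length) :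
    IsDyck (insPair v i) ↔ IsDyck v := by
  rw [isDyck_iff, isDyck_iff]
  have hct := insPair_count v i true
  have hcf := insPair_count v i false
  constructor
  · rintro ⟨h1, h2⟩
    refine ⟨by omega, fun j => ?_⟩
    rcases le_or_gt j i with hj | hj
    · have := h2 j; rwa [insPair_take_of_le hi hj] at this
    · have := h2 (j+2)
      rw [insPair_take_of_ge hi (by omega)] at this
      rw [show j = i + (j - i) by omega, List.take_add]
      simp only [List.count_append, List.count_cons] at this ⊢
      simp at this ⊢
      omega
  · rintro ⟨h1, h2⟩
    refine ⟨by omega, fun j => ?_⟩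
    rcases le_or_gt j i with hj | hj
    · rw [insPair_take_of_le hi hj]; exact h2 j
    rcases eq_or_lt_of_le (Nat.succ_le_of_lt hj) with hj' | hj'
    · rw [← hj', insPair_take_succ hi]
      have := h2 i
      simp [List.count_append]
      omega
    · rw [show j = (j - 2) + 2 by omega, insPair_take_of_ge hi (by omega)]
      have := h2 (j - 2)
      rw [show j - 2 = i + (j - 2 - i) by omega, List.take_add] at this
      simp only [List.count_append, List.count_cons] at this ⊢
      simp at this ⊢
      omega

lemma isPeakAt_insPair {v : List Bool} {i : ℕ} (hi : i ≤ v.length) :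
    IsPeakAt (insPair v i) i := by
  have hl : (v.take i).length = i := by simp [Nat.min_eq_left hi]
  constructor
  · rw [insPair, List.getElem?_append_right (by omega), hl]
    simp
  · rw [insPair, List.getElem?_append_right (by omega), hl]
    simp

lemma reconstruct {w : List Bool} {i : ℕ} (h : IsPeakAt w i) :
    w = insPair (w.take i ++ w.drop (i+2)) i ∧ i + 2 ≤ w.length := by
  obtain ⟨h1, h2⟩ := h
  obtain ⟨hi1, he1⟩ := List.getElem?_eq_some_iff.mp h1
  obtain ⟨hi2, he2⟩ := List.getElem?_eq_some_iff.mp h2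
  have hli : i ≤ w.length := by omega
  have hlt : (w.take i).length = i := by simp [Nat.min_eq_left hli]
  refine ⟨?_, by omega⟩
  have hd : w.drop i = true :: false :: w.drop (i+2) := by
    rw [List.drop_eq_getElem_cons hi1, he1, List.drop_eq_getElem_cons (l := w) (by omega), he2]
  conv_lhs => rw [← List.take_append_drop i w, hd]
  rw [insPair]
  congr 1
  · rw [List.take_append, hlt, Nat.sub_self, List.take_zero, List.append_nil,
      List.take_take, Nat.min_self]
  · congr 2
    rw [List.drop_left' hlt]

open DyckStep in
def boolToStep (b : Bool) : DyckStep := if b then U else D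

def stepToBool (s : DyckStep) : Bool := decide (s = DyckStep.U)

lemma boolToStep_injective : Function.Injective boolToStep := by
  intro a b; cases a <;> cases b <;> simp [boolToStep]

lemma stepToBool_injective : Function.Injective stepToBool := by
  intro a b; cases a <;> cases b <;> simp [stepToBool]

lemma count_map_bts_U (l : List Bool) : (l.map boolToStep).count DyckStep.U = l.count true := by
  simpa [boolToStep] using List.count_map_of_injective l boolToStep boolToStep_injective true

lemma count_map_bts_D (l : List Bool) : (l.map boolToStep).count DyckStep.D = l.count false := by
  simpa [boolToStep] using List.count_map_of_injective l boolToStep boolToStep_injective false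

lemma count_map_stb_t (l : List DyckStep) : (l.map stepToBool).count true = l.count DyckStep.U := by
  simpa [stepToBool] using List.count_map_of_injective l stepToBool stepToBool_injective DyckStep.U

lemma count_map_stb_f (l : List DyckStep) : (l.map stepToBool).count false = l.count DyckStep.D := by
  simpa [stepToBool] using List.count_map_of_injective l stepToBool stepToBool_injective DyckStep.D

def dyckEquiv (m : ℕ) :
    {v : List Bool // v.length = 2*m ∧ IsDyck v} ≃ {p : DyckWord // p.semilength = m} where
  toFun := fun x => ⟨⟨x.1.map boolToStep,
      by rw [count_map_bts_U, count_map_bts_D]; exact x.2.2.1,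
      by
        intro i
        rw [← List.map_take, count_map_bts_U, count_map_bts_D]
        exact ((isDyck_iff x.1).mp x.2.2).2 i⟩,
      by
        show (x.1.map boolToStep).count DyckStep.U = m
        rw [count_map_bts_U]
        have h1 := bool_count_true_add_count_false x.1
        have h2 := x.2.2.1
        have h3 := x.2.1
        omega⟩
  invFun := fun x => ⟨x.1.toList.map stepToBool,
      by
        refine ⟨?_, ?_⟩
        · have h := DyckWord.two_mul_semilength_eq_length (p := x.1)
          rw [x.2] at h
          simpa using h.symm
        · rw [isDyck_iff]
          refine ⟨?_, fun j => ?_⟩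
          · rw [count_map_stb_t, count_map_stb_f]; exact x.1.count_U_eq_count_D
          · rw [← List.map_take, count_map_stb_t, count_map_stb_f]
            exact x.1.count_D_le_count_U j⟩
  left_inv := fun x => by
    apply Subtype.ext
    show (x.1.map boolToStep).map stepToBool = x.1
    simp only [List.map_map]
    have : stepToBool ∘ boolToStep = id := by
      funext b; cases b <;> rfl
    rw [this, List.map_id]
  right_inv := fun x => by
    apply Subtype.ext
    apply DyckWord.ext
    show (x.1.toList.map stepToBool).map boolToStep = x.1.toList
    simp only [List.map_map]
    have : boolToStep ∘ stepToBool = id := by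
      funext s; cases s <;> rfl
    rw [this, List.map_id]

lemma card_dyck_lists (m : ℕ) :
    Nat.card {v : List Bool // v.length = 2*m ∧ IsDyck v} = catalan m := by
  rw [Nat.card_congr (dyckEquiv m), Nat.card_eq_fintype_card,
    DyckWord.card_dyckWord_semilength_eq_catalan]

lemma fwd_mem {m : ℕ} {w : List Bool} {i : ℕ} (hw : w.length = 2*(m+1)) (hd : IsDyck w)
    (hp : IsPeakAt w i) :
    (w.take i ++ w.drop (i+2)).length = 2*m ∧ IsDyck (w.take i ++ w.drop (i+2)) ∧ i < 2*m+1 := by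
  obtain ⟨hrec, hlen⟩ := reconstruct hp
  have hvl : (w.take i ++ w.drop (i+2)).length = 2*m := by
    simp only [List.length_append, List.length_take, List.length_drop]
    omega
  refine ⟨hvl, ?_, by omega⟩
  rw [← isDyck_insPair_iff (by rw [hvl]; omega : i ≤ (w.take i ++ w.drop (i+2)).length), ← hrec]
  exact hd

lemma bwd_mem {m : ℕ} {v : List Bool} {i : ℕ} (hv : v.length = 2*m) (hd : IsDyck v)
    (hi : i < 2*m+1) :
    (insPair v i).length = 2*(m+1) ∧ IsDyck (insPair v i) ∧ IsPeakAt (insPair v i) i := by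
  have hi' : i ≤ v.length := by omega
  exact ⟨by rw [insPair_length]; omega, (isDyck_insPair_iff hi').mpr hd, isPeakAt_insPair hi'⟩

def peakEquiv (m : ℕ) :
    {p : List Bool × ℕ // p.1.length = 2*(m+1) ∧ IsDyck p.1 ∧ IsPeakAt p.1 p.2} ≃
    {v : List Bool // v.length = 2*m ∧ IsDyck v} × Fin (2*m+1) where
  toFun := fun x =>
    (⟨x.1.1.take x.1.2 ++ x.1.1.drop (x.1.2+2),
      (fwd_mem x.2.1 x.2.2.1 x.2.2.2).1, (fwd_mem x.2.1 x.2.2.1 x.2.2.2).2.1⟩,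
     ⟨x.1.2, (fwd_mem x.2.1 x.2.2.1 x.2.2.2).2.2⟩)
  invFun := fun y =>
    ⟨(insPair y.1.1 y.2.1, y.2.1),
      (bwd_mem y.1.2.1 y.1.2.2 y.2.2).1, (bwd_mem y.1.2.1 y.1.2.2 y.2.2).2.1,
      (bwd_mem y.1.2.1 y.1.2.2 y.2.2).2.2⟩
  left_inv := fun x => by
    apply Subtype.ext
    show (insPair (x.1.1.take x.1.2 ++ x.1.1.drop (x.1.2+2)) x.1.2, x.1.2) = x.1
    have := (reconstruct x.2.2.2).1
    exact Prod.ext this.symm rfl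
  right_inv := fun y => by
    have hi' : y.2.1 ≤ y.1.1.length := by have := y.2.2; have := y.1.2.1; omega
    refine Prod.ext (Subtype.ext ?_) (Fin.ext rfl)
    show (insPair y.1.1 y.2.1).take y.2.1 ++ (insPair y.1.1 y.2.1).drop (y.2.1+2) = y.1.1
    rw [insPair_take_of_le hi' le_rfl, insPair_drop y.1.1 hi', List.take_append_drop]

lemma card_peaks (m : ℕ) :
    Nat.card {p : List Bool × ℕ //
        p.1.length = 2*(m+1) ∧ IsDyck p.1 ∧ IsPeakAt p.1 p.2} = catalan m * (2*m+1) := by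
  rw [Nat.card_congr (peakEquiv m), Nat.card_prod, card_dyck_lists, Nat.card_eq_fintype_card,
    Fintype.card_fin]

lemma catalan_mul_eq_choose (m : ℕ) : catalan m * (2*m+1) = (2*m+1).choose (m+1) := by
  have h2 := succ_mul_catalan_eq_centralBinom m
  rw [Nat.centralBinom] at h2
  have h3 := Nat.add_one_mul_choose_eq (2*m) m
  try simp only [Nat.succ_eq_add_one] at h3
  have key : (m+1) * (catalan m * (2*m+1)) = (m+1) * ((2*m+1).choose (m+1)) := by
    calc (m+1) * (catalan m * (2*m+1)) = (2*m+1) * ((m+1) * catalan m) := by ring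
      _ = (2*m+1) * ((2*m).choose m) := by rw [h2]
      _ = (2*m+1).choose (m+1) * (m+1) := h3
      _ = (m+1) * ((2*m+1).choose (m+1)) := by ring
  exact Nat.eq_of_mul_eq_mul_left (by omega) key

lemma vander (m : ℕ) :
    ∑ j ∈ Finset.range (m+1), m.choose j * (m+1).choose j = (2*m+1).choose (m+1) := by
  rw [show 2*m+1 = m + (m+1) by omega, Nat.add_choose_eq m (m+1) (m+1),
    Finset.Nat.sum_antidiagonal_eq_sum_range_succ_mk]
  conv_rhs => rw [Finset.sum_range_succ]
  simp only [Nat.choose_succ_self, Nat.zero_mul, Nat.add_zero]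
  refine Finset.sum_congr rfl fun i hi => ?_
  rw [Finset.mem_range] at hi
  congr 1
  rw [show m + 1 - i = (m+1) - i from rfl, Nat.choose_symm (by omega)]


theorem total_peaks_dyck (n : ℕ) (hn : 1 ≤ n) :
    Nat.card {p : List Bool × ℕ //
        p.1.length = 2 * n ∧ IsDyck p.1 ∧ IsPeakAt p.1 p.2} =
      Nat.choose (2 * n - 1) n ∧
    ∑ k ∈ Finset.Icc 1 n,
        (k : ℚ) * ((1 / n) * (n.choose k) * (n.choose (k - 1))) =
      Nat.choose (2 * n - 1) n := by
  obtain ⟨m, rfl⟩ : ∃ m, n = m + 1 := ⟨n - 1, by omega⟩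
  have h21 : 2 * (m+1) - 1 = 2*m+1 := by omega
  constructor
  · rw [card_peaks m, catalan_mul_eq_choose, h21]
  · rw [h21]
    have hstep : ∀ k ∈ Finset.Icc 1 (m+1),
        (k : ℚ) * ((1 / ((m+1 : ℕ) : ℚ)) * (((m+1).choose k : ℕ) : ℚ) * (((m+1).choose (k-1) : ℕ) : ℚ)) =
        ((m.choose (k-1) * (m+1).choose (k-1) : ℕ) : ℚ) := by
      intro k hk
      rw [Finset.mem_Icc] at hk
      have hnat : (m+1) * (m.choose (k-1)) = (m+1).choose k * k := by
        have h := Nat.add_one_mul_choose_eq m (k-1)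
        try simp only [Nat.succ_eq_add_one] at h
        rwa [show k - 1 + 1 = k by omega] at h
      have hq := congrArg (Nat.cast : ℕ → ℚ) hnat
      push_cast at hq ⊢
      have hm : ((m:ℚ)+1) ≠ 0 := by positivity
      field_simp
      linear_combination (-1 * (((m+1).choose (k-1) : ℕ) : ℚ)) * hq
    rw [Finset.sum_congr rfl hstep, ← Finset.Ico_add_one_right_eq_Icc, Finset.sum_Ico_eq_sum_range]
    have hred : ∀ i ∈ Finset.range (m + 1 + 1 - 1),
        ((m.choose (1+i-1) * (m+1).choose (1+i-1) : ℕ) : ℚ) =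
        ((m.choose i * (m+1).choose i : ℕ) : ℚ) := by
      intro i _
      norm_num
    rw [Finset.sum_congr rfl hred]
    rw [show m + 1 + 1 - 1 = m + 1 from rfl, ← Nat.cast_sum, vander]
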